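/- Let G = (g_{ij}) be a Hermitian 4×4 complex matrix with g_{ii} = 0, g₁₂ = g₂₃ = g₃₄ = 1, |g₁₃| = 1, g₁₄ ≠ 0, g₂₄ ≠ 0. Then there exist four nonzero null vectors P₁,P₂,P₃,P₄ in ℂ^{2,1}, pairwise linearly independent, with ⟨P_i,P_j⟩ = g_{ij} for all i,j, if and only if Re(g₁₃) ≤ 0, Re(g₂₄·conj(g₁₄)) ≤ 0, and det G = 0. -/

import Mathlib

open Complex Matrix
open scoped ComplexConjugate

noncomputable section

/-- The Hermitian form of signature `(n,1)` on `ℂ^{n+1}`: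
`⟨Z,W⟩ = Z₁·conj W_{n+1} + Z₂·conj W₂ + ⋯ + Z_n·conj W_n + Z_{n+1}·conj W₁`. -/
def herm {n : ℕ} (Z W : Fin (n + 1) → ℂ) : ℂ :=
  Z 0 * conj (W (Fin.last n)) + Z (Fin.last n) * conj (W 0) +
    ∑ i ∈ Finset.univ.filter (fun i : Fin (n + 1) => i ≠ 0 ∧ i ≠ Fin.last n),
      Z i * conj (W i)

/-- The Gram matrix of a quadruple of vectors. -/
def gram {n : ℕ} (P : Fin 4 → Fin (n + 1) → ℂ) : Matrix (Fin 4) (Fin 4) ℂ :=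
  fun i j => herm (P i) (P j)

/-- A quadruple of nonzero null vectors, pairwise linearly independent. -/
def IsNullQuadruple {n : ℕ} (P : Fin 4 → Fin (n + 1) → ℂ) : Prop :=
  (∀ i, P i ≠ 0) ∧ (∀ i, herm (P i) (P i) = 0) ∧
    ∀ i j, i ≠ j → LinearIndependent ℂ ![P i, P j]

/-- The Korányi–Reimann complex cross-ratio. -/
def crossRatio {n : ℕ} (P₁ P₂ P₃ P₄ : Fin (n + 1) → ℂ) : ℂ :=
  (herm P₃ P₁ * herm P₄ P₂) / (herm P₄ P₁ * herm P₃ P₂)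

/-- Cartan's angular invariant. -/
def cartan {n : ℕ} (P₁ P₂ P₃ : Fin (n + 1) → ℂ) : ℝ :=
  (-(herm P₁ P₂ * herm P₂ P₃ * herm P₃ P₁)).arg

/-- `G` is the normalized Gram matrix of the quadruple `P`. -/
def IsNormalizedGram {n : ℕ} (P : Fin 4 → Fin (n + 1) → ℂ)
    (G : Matrix (Fin 4) (Fin 4) ℂ) : Prop :=
  (∃ d : Fin 4 → ℂ, (∀ i, d i ≠ 0) ∧
      G = (Matrix.diagonal d)ᴴ * gram P * Matrix.diagonal d) ∧
    G 0 1 = 1 ∧ G 1 2 = 1 ∧ G 2 3 = 1 ∧ ‖G 0 2‖ = 1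

/-- Two quadruples are congruent if a linear map preserving the Hermitian form
sends one to the other up to nonzero scalars. -/
def HermCongruent {n : ℕ} (P P' : Fin 4 → Fin (n + 1) → ℂ) : Prop :=
  ∃ A : (Fin (n + 1) → ℂ) →ₗ[ℂ] (Fin (n + 1) → ℂ),
    (∀ Z W, herm (A Z) (A W) = herm Z W) ∧
    ∃ lam : Fin 4 → ℂ, (∀ i, lam i ≠ 0) ∧ ∀ i, A (P i) = lam i • P' i

lemma herm2 (Z W : Fin 3 → ℂ) :
    herm Z W = Z 0 * conj (W 2) + Z 2 * conj (W 0) + Z 1 * conj (W 1) := by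
  have : (Finset.univ.filter (fun i : Fin 3 => i ≠ 0 ∧ i ≠ Fin.last 2)) = {1} := by decide
  rw [herm, this, Finset.sum_singleton]
  rfl

lemma herm_conj (Z W : Fin 3 → ℂ) : herm W Z = conj (herm Z W) := by
  simp only [herm2, map_add, _root_.map_mul, Complex.conj_conj]
  ring

lemma triple_re_nonpos (Z₁ Z₂ Z₃ : Fin 3 → ℂ) (h1 : herm Z₁ Z₁ = 0)
    (h2 : herm Z₂ Z₂ = 0) (h3 : herm Z₃ Z₃ = 0) :
    (herm Z₁ Z₂ * herm Z₂ Z₃ * herm Z₃ Z₁).re ≤ 0 := by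
  have h1' : Z₁ 0 * conj (Z₁ 2) + Z₁ 2 * conj (Z₁ 0) + Z₁ 1 * conj (Z₁ 1) = 0 := by
    rw [← herm2]; exact h1
  have h2' : Z₂ 0 * conj (Z₂ 2) + Z₂ 2 * conj (Z₂ 0) + Z₂ 1 * conj (Z₂ 1) = 0 := by
    rw [← herm2]; exact h2
  have h3' : Z₃ 0 * conj (Z₃ 2) + Z₃ 2 * conj (Z₃ 0) + Z₃ 1 * conj (Z₃ 1) = 0 := by
    rw [← herm2]; exact h3
  set A : Matrix (Fin 3) (Fin 3) ℂ :=
    !![Z₁ 0, Z₁ 1, Z₁ 2; Z₂ 0, Z₂ 1, Z₂ 2; Z₃ 0, Z₃ 1, Z₃ 2] with hA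
  set B : Matrix (Fin 3) (Fin 3) ℂ :=
    !![conj (Z₁ 2), conj (Z₂ 2), conj (Z₃ 2); conj (Z₁ 1), conj (Z₂ 1), conj (Z₃ 1);
       conj (Z₁ 0), conj (Z₂ 0), conj (Z₃ 0)] with hBdef
  have hB : B.det = -conj A.det := by
    simp [hA, hBdef, Matrix.det_fin_three, map_add, _root_.map_mul, map_sub, Complex.conj_conj]
    all_goals ring
  have hAB : A * B = !![0, herm Z₁ Z₂, herm Z₁ Z₃;
      herm Z₂ Z₁, 0, herm Z₂ Z₃; herm Z₃ Z₁, herm Z₃ Z₂, 0] := by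
    ext i j
    fin_cases i <;> fin_cases j <;>
      simp [Matrix.mul_apply, Fin.sum_univ_three, hA, hBdef, herm2] <;>
      first
      | linear_combination h1'
      | linear_combination h2'
      | linear_combination h3'
      | ring
  have h4 := congrArg Matrix.det hAB
  rw [Matrix.det_mul, hB] at h4
  simp [Matrix.det_fin_three, herm_conj Z₁ Z₂, herm_conj Z₂ Z₃, herm_conj Z₃ Z₁] at h4
  obtain ⟨w, key⟩ : ∃ w : ℂ, herm Z₁ Z₂ * herm Z₂ Z₃ * herm Z₃ Z₁ +
      conj (herm Z₁ Z₂ * herm Z₂ Z₃ * herm Z₃ Z₁) = -(w * conj w) := by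
    refine ⟨A 0 0 * A 1 1 * A 2 2 - A 0 0 * A 1 2 * A 2 1 - A 0 1 * A 1 0 * A 2 2 +
      A 0 1 * A 1 2 * A 2 0 + A 0 2 * A 1 0 * A 2 1 - A 0 2 * A 1 1 * A 2 0, ?_⟩
    simp only [_root_.map_mul, map_add, map_sub]
    linear_combination -h4
  have hre := congrArg Complex.re key
  rw [Complex.add_re, Complex.conj_re, Complex.mul_conj] at hre
  simp only [Complex.neg_re, Complex.ofReal_re] at hre
  have := Complex.normSq_nonneg w
  linarith

lemma gram_det_zero (P : Fin 4 → Fin 3 → ℂ) (G : Matrix (Fin 4) (Fin 4) ℂ)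
    (hG : ∀ i j, herm (P i) (P j) = G i j) : G.det = 0 := by
  set A : Matrix (Fin 4) (Fin 4) ℂ := Matrix.of (fun i => ![P i 0, P i 1, P i 2, 0]) with hA
  set B : Matrix (Fin 4) (Fin 4) ℂ :=
    Matrix.of ![(fun j => conj (P j 2)), (fun j => conj (P j 1)), (fun j => conj (P j 0)), 0]
    with hBdef
  have hAB : A * B = G := by
    ext i j
    have : (A * B) i j = P i 0 * conj (P j 2) + P i 1 * conj (P j 1) + P i 2 * conj (P j 0) := by
      simp [Matrix.mul_apply, Fin.sum_univ_four, hA, hBdef]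
    rw [this, ← hG, herm2]
    ring
  have hBdet : B.det = 0 := Matrix.det_eq_zero_of_row_eq_zero 3 (fun j => rfl)
  obtain ⟨v, hv, hv0⟩ := (Matrix.exists_mulVec_eq_zero_iff).mpr hBdet
  refine (Matrix.exists_mulVec_eq_zero_iff).mp ⟨v, hv, ?_⟩
  rw [← hAB, ← Matrix.mulVec_mulVec, hv0, Matrix.mulVec_zero]

lemma herm_lin (s t : ℂ) (v w x : Fin 3 → ℂ) :
    herm (s • v + t • w) x = s * herm v x + t * herm w x := by
  simp only [herm2, Pi.add_apply, Pi.smul_apply, smul_eq_mul]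
  ring

lemma li_pair (v w : Fin 3 → ℂ) (hv : herm v v = 0) (hw : herm w w = 0)
    (hvw : herm v w ≠ 0) : LinearIndependent ℂ ![v, w] := by
  rw [LinearIndependent.pair_iff]
  intro s t hst
  have e1 : s * herm v w + t * herm w w = 0 := by
    rw [← herm_lin, hst]; simp [herm2]
  have e2 : s * herm v v + t * herm w v = 0 := by
    rw [← herm_lin, hst]; simp [herm2]
  rw [hw, mul_zero, add_zero] at e1
  rw [hv, mul_zero, zero_add] at e2
  have hwv : herm w v ≠ 0 := by
    rw [herm_conj]; simpa using hvw
  exact ⟨(mul_eq_zero.mp e1).resolve_right hvw, (mul_eq_zero.mp e2).resolve_right hwv⟩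

lemma my_det_fin_four (M : Matrix (Fin 4) (Fin 4) ℂ) :
    M.det = M 0 0*M 1 1*M 2 2*M 3 3 - M 0 0*M 1 1*M 2 3*M 3 2 - M 0 0*M 1 2*M 2 1*M 3 3 + M 0 0*M 1 2*M 2 3*M 3 1 + M 0 0*M 1 3*M 2 1*M 3 2 - M 0 0*M 1 3*M 2 2*M 3 1 - M 0 1*M 1 0*M 2 2*M 3 3 + M 0 1*M 1 0*M 2 3*M 3 2 + M 0 1*M 1 2*M 2 0*M 3 3 - M 0 1*M 1 2*M 2 3*M 3 0 - M 0 1*M 1 3*M 2 0*M 3 2 + M 0 1*M 1 3*M 2 2*M 3 0 + M 0 2*M 1 0*M 2 1*M 3 3 - M 0 2*M 1 0*M 2 3*M 3 1 - M 0 2*M 1 1*M 2 0*M 3 3 + M 0 2*M 1 1*M 2 3*M 3 0 + M 0 2*M 1 3*M 2 0*M 3 1 - M 0 2*M 1 3*M 2 1*M 3 0 - M 0 3*M 1 0*M 2 1*M 3 2 + M 0 3*M 1 0*M 2 2*M 3 1 + M 0 3*M 1 1*M 2 0*M 3 2 - M 0 3*M 1 1*M 2 2*M 3 0 - M 0 3*M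 1 2*M 2 0*M 3 1 + M 0 3*M 1 2*M 2 1*M 3 0 := by
  rw [Matrix.det_succ_row_zero]
  simp [Fin.sum_univ_succ, Matrix.det_fin_three, Matrix.submatrix_apply, Fin.succAbove,
    show (Fin.succ 2 : Fin 4) = 3 by decide, show (Fin.castSucc 2 : Fin 4) = 2 by decide, show (Fin.succ 1 : Fin 4) = 2 by decide, show (Fin.castSucc 1 : Fin 4) = 1 by decide]
  ring

/-- characterization of normalized Gram matrices of quadruples of
distinct points in `∂ℂH²`. -/
theorem stmt8 (G : Matrix (Fin 4) (Fin 4) ℂ) (hherm : G.IsHermitian)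
    (hdiag : ∀ i, G i i = 0)
    (h12 : G 0 1 = 1) (h23 : G 1 2 = 1) (h34 : G 2 3 = 1)
    (h13 : ‖G 0 2‖ = 1) (h14 : G 0 3 ≠ 0) (h24 : G 1 3 ≠ 0) :
    (∃ P : Fin 4 → Fin 3 → ℂ, IsNullQuadruple (n := 2) P ∧
        ∀ i j, herm (P i) (P j) = G i j) ↔
      (G 0 2).re ≤ 0 ∧ (G 1 3 * conj (G 0 3)).re ≤ 0 ∧ G.det = 0 := by
  have hsym : ∀ i j, G j i = conj (G i j) := by
    intro i j
    conv_lhs => rw [← hherm]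
    simp [Matrix.conjTranspose_apply]
  constructor
  · rintro ⟨P, ⟨hne, hnull, hli⟩, hG⟩
    refine ⟨?_, ?_, gram_det_zero P G hG⟩
    · have t := triple_re_nonpos (P 0) (P 1) (P 2) (hnull 0) (hnull 1) (hnull 2)
      rw [hG 0 1, hG 1 2, hG 2 0, h12, h23, hsym 0 2] at t
      simpa using t
    · have t := triple_re_nonpos (P 0) (P 1) (P 3) (hnull 0) (hnull 1) (hnull 3)
      rw [hG 0 1, hG 1 3, hG 3 0, h12, hsym 0 3] at t
      simpa using t
  · rintro ⟨hre13, hre24, hdet⟩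
    set u := G 0 2 with hu
    set f := G 0 3 with hf
    set hh := G 1 3 with hhh
    have hune : u ≠ 0 := by
      intro h0
      rw [h0] at h13
      simp at h13
    have hg10 : G 1 0 = 1 := by rw [hsym 0 1, h12, _root_.map_one]
    have hg21 : G 2 1 = 1 := by rw [hsym 1 2, h23, _root_.map_one]
    have hg32 : G 3 2 = 1 := by rw [hsym 2 3, h34, _root_.map_one]
    have hg20 : G 2 0 = conj u := hsym 0 2
    have hg30 : G 3 0 = conj f := hsym 0 3
    have hg31 : G 3 1 = conj hh := hsym 1 3
    have hdetid : G.det = (1 - f - conj u * hh) * conj (1 - f - conj u * hh)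
        - (u + conj u) * (f * conj hh + conj f * hh) := by
      rw [my_det_fin_four]
      simp only [hdiag, hg10, hg21, hg32, hg20, hg30, hg31, h12, h23, h34, ← hu, ← hf, ← hhh]
      simp only [map_sub, _root_.map_one, _root_.map_mul, Complex.conj_conj]
      ring
    set b : ℝ := Real.sqrt (-2 * u.re) with hb
    have hbnn : 0 ≤ b := Real.sqrt_nonneg _
    have hb2 : (b : ℂ) * (b : ℂ) = -(u + conj u) := by
      have h1 : b * b = -2 * u.re := Real.mul_self_sqrt (by linarith)
      have h2 : u + conj u = ((2 * u.re : ℝ) : ℂ) := Complex.add_conj u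
      rw [h2, ← Complex.ofReal_mul, h1]
      push_cast; ring
    have hss : (1 - f - conj u * hh) * conj (1 - f - conj u * hh) =
        -((b : ℂ) * (b : ℂ)) * (f * conj hh + conj f * hh) := by
      rw [hb2]
      rw [hdetid] at hdet
      linear_combination hdet
    have hfh : f * conj hh + conj f * hh = ((2 * (hh * conj f).re : ℝ) : ℂ) := by
      have := Complex.add_conj (hh * conj f)
      simp only [_root_.map_mul, Complex.conj_conj] at this
      rw [← this]; push_cast; ring
    obtain ⟨y, hy1, hy2⟩ : ∃ y : ℂ, (b : ℂ) * conj y = 1 - f - conj u * hh ∧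
        y * conj y = -(f * conj hh + conj f * hh) := by
      rcases eq_or_lt_of_le hre13 with h0 | hlt
      · have hb0' : b = 0 := by
          rw [hb, h0]
          norm_num
        have hb0 : (b : ℂ) = 0 := by exact_mod_cast hb0' 
        have hs0 : (1 - f - conj u * hh) = 0 := by
          have hz : (1 - f - conj u * hh) * conj (1 - f - conj u * hh) = 0 := by
            rw [hss, hb0]; ring
          rcases mul_eq_zero.mp hz with h | h
          · exact h
          · exact (map_eq_zero _).mp h
        refine ⟨(Real.sqrt (-(2 * (hh * conj f).re)) : ℂ), ?_, ?_⟩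
        · rw [hb0, hs0]; ring
        · rw [Complex.conj_ofReal, ← Complex.ofReal_mul,
            Real.mul_self_sqrt (by linarith [hre24]), hfh]
          push_cast; ring
      · have hbpos : 0 < b := Real.sqrt_pos.mpr (by linarith)
        have hbne : (b : ℂ) ≠ 0 := by exact_mod_cast hbpos.ne'
        refine ⟨conj (1 - f - conj u * hh) / (b : ℂ), ?_, ?_⟩
        · rw [map_div₀, Complex.conj_conj, Complex.conj_ofReal]
          field_simp
        · rw [map_div₀, Complex.conj_conj, Complex.conj_ofReal]
          field_simp
          simp only [map_sub, _root_.map_one, _root_.map_mul, Complex.conj_conj] at hss ⊢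
          linear_combination hss
    set P : Fin 4 → Fin 3 → ℂ :=
      ![![1, 0, 0], ![0, 0, 1], ![1, (b : ℂ), conj u], ![conj hh, y, conj f]] with hP
    have e00 : herm (P 0) (P 0) = G 0 0 := by rw [herm2, hdiag]; simp [hP]
    have e01 : herm (P 0) (P 1) = G 0 1 := by rw [herm2, h12]; simp [hP]
    have e02 : herm (P 0) (P 2) = G 0 2 := by rw [herm2, ← hu]; simp [hP]
    have e03 : herm (P 0) (P 3) = G 0 3 := by rw [herm2, ← hf]; simp [hP]
    have e10 : herm (P 1) (P 0) = G 1 0 := by rw [herm2, hg10]; simp [hP]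
    have e11 : herm (P 1) (P 1) = G 1 1 := by rw [herm2, hdiag]; simp [hP]
    have e12 : herm (P 1) (P 2) = G 1 2 := by rw [herm2, h23]; simp [hP]
    have e13 : herm (P 1) (P 3) = G 1 3 := by rw [herm2, ← hhh]; simp [hP]
    have e20 : herm (P 2) (P 0) = G 2 0 := by rw [herm2, hg20]; simp [hP]
    have e21 : herm (P 2) (P 1) = G 2 1 := by rw [herm2, hg21]; simp [hP]
    have e22 : herm (P 2) (P 2) = G 2 2 := by
      rw [herm2, hdiag]; simp [hP, Complex.conj_ofReal]; linear_combination hb2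
    have e23 : herm (P 2) (P 3) = G 2 3 := by
      rw [herm2, h34]; simp [hP]; linear_combination hy1
    have e30 : herm (P 3) (P 0) = G 3 0 := by rw [herm2, hg30]; simp [hP]
    have e31 : herm (P 3) (P 1) = G 3 1 := by rw [herm2, hg31]; simp [hP]
    have e32 : herm (P 3) (P 2) = G 3 2 := by
      rw [herm2, hg32]
      simp [hP, Complex.conj_ofReal]
      have hy1' := congrArg conj hy1
      simp only [_root_.map_mul, map_sub, _root_.map_one, Complex.conj_conj,
        Complex.conj_ofReal] at hy1'
      linear_combination hy1'
    have e33 : herm (P 3) (P 3) = G 3 3 := by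
      rw [herm2, hdiag]; simp [hP]; linear_combination hy2
    have hGram : ∀ i j, herm (P i) (P j) = G i j := by
      intro i j
      fin_cases i <;> fin_cases j <;>
        first
        | exact e00 | exact e01 | exact e02 | exact e03
        | exact e10 | exact e11 | exact e12 | exact e13
        | exact e20 | exact e21 | exact e22 | exact e23
        | exact e30 | exact e31 | exact e32 | exact e33
    have hnull : ∀ i, herm (P i) (P i) = 0 := by
      intro i
      rw [hGram i i, hdiag]
    have n01 : G 0 1 ≠ 0 := by rw [h12]; exact one_ne_zero
    have n12 : G 1 2 ≠ 0 := by rw [h23]; exact one_ne_zero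
    have n23 : G 2 3 ≠ 0 := by rw [h34]; exact one_ne_zero
    have n10 : G 1 0 ≠ 0 := by rw [hg10]; exact one_ne_zero
    have n21 : G 2 1 ≠ 0 := by rw [hg21]; exact one_ne_zero
    have n32 : G 3 2 ≠ 0 := by rw [hg32]; exact one_ne_zero
    have n02 : G 0 2 ≠ 0 := hune
    have n03 : G 0 3 ≠ 0 := h14
    have n13 : G 1 3 ≠ 0 := h24
    have n20 : G 2 0 ≠ 0 := by rw [hg20]; simpa using hune
    have n30 : G 3 0 ≠ 0 := by rw [hg30]; simpa using h14
    have n31 : G 3 1 ≠ 0 := by rw [hg31]; simpa using h24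
    have hGne : ∀ i j, i ≠ j → G i j ≠ 0 := by
      intro i j hij
      fin_cases i <;> fin_cases j <;>
        first
        | exact absurd rfl hij
        | exact n01 | exact n02 | exact n03
        | exact n10 | exact n12 | exact n13
        | exact n20 | exact n21 | exact n23
        | exact n30 | exact n31 | exact n32
    refine ⟨P, ⟨?_, hnull, ?_⟩, hGram⟩
    · intro i
      fin_cases i
      · intro h0; simpa [hP] using congrFun h0 0
      · intro h0; simpa [hP] using congrFun h0 2
      · intro h0; simpa [hP] using congrFun h0 0
      · intro h0
        have h1 := congrFun h0 0
        simp [hP] at h1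
        exact h24 h1
    · intro i j hij
      exact li_pair _ _ (hnull i) (hnull j) (by rw [hGram]; exact hGne i j hij)
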